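/- arXiv:0704.2800 — 7 statements merged into one kernel-verified Lean document; each statement's English description precedes it below -/
import Mathlib

section
/- Let X be a locally compact, second countable, Hausdorff topological space and let R : C₀(X) → C₀(X) be a bounded linear map (C₀(X) the continuous complex-valued functions on X vanishing at infinity, with the supremum norm) such that for every f ∈ C₀(X) with compact support, the support of Rf is contained in the support of f. Then there exists a bounded continuous function k : X → ℂ with ‖k‖_∞ ≤ ‖R‖ such that Rf = k·f (pointwise product) for all f ∈ C₀(X). -/
open ZeroAtInfty Set Filter Topology

/-- A complex-valued bump function in `C₀`: equals 1 on the compact set `s`, vanishes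
outside the open set `U ⊇ s`, has compact support, and takes values with norm ≤ 1. -/
lemma exists_bump_aux {X : Type*} [TopologicalSpace X] [LocallyCompactSpace X] [T2Space X]
    {s U : Set X} (hs : IsCompact s) (hU : IsOpen U) (hsU : s ⊆ U) :
    ∃ e : C₀(X, ℂ), HasCompactSupport (e : X → ℂ) ∧ Set.EqOn (⇑e) 1 s ∧
      (∀ y, y ∉ U → e y = 0) ∧ (∀ y, ‖e y‖ ≤ 1) ∧ (∀ y, ‖1 - e y‖ ≤ 1) := by
  obtain ⟨e, he1, he0, hec, he01⟩ :=
    exists_continuous_one_zero_of_isCompact hs hU.isClosed_compl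
      (Set.disjoint_left.mpr fun y hy hyc => hyc (hsU hy))
  have hc : Continuous fun y => ((e y : ℝ) : ℂ) := Complex.continuous_ofReal.comp e.continuous
  have hsupp : HasCompactSupport fun y => ((e y : ℝ) : ℂ) :=
    hec.comp_left (g := fun r : ℝ => (r : ℂ)) Complex.ofReal_zero
  refine ⟨⟨⟨fun y => ((e y : ℝ) : ℂ), hc⟩, hsupp.is_zero_at_infty⟩, hsupp, ?_, ?_, ?_, ?_⟩
  · intro y hy
    have := he1 hy
    simp only [Pi.one_apply] at this ⊢
    simp [ZeroAtInftyContinuousMap.coe_mk, this]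
  · intro y hy
    have := he0 hy
    simp only [Pi.zero_apply] at this
    simp [this]
  · intro y
    have h01 := he01 y
    show ‖((e y : ℝ) : ℂ)‖ ≤ 1
    rw [Complex.norm_real, Real.norm_eq_abs, abs_le]
    constructor <;> [linarith [h01.1]; linarith [h01.2]]
  · intro y
    have h01 := he01 y
    show ‖(1 : ℂ) - ((e y : ℝ) : ℂ)‖ ≤ 1
    have : (1 : ℂ) - ((e y : ℝ) : ℂ) = (((1 - e y : ℝ)) : ℂ) := by push_cast; ring
    rw [this, Complex.norm_real, Real.norm_eq_abs, abs_le]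
    constructor <;> [linarith [h01.2]; linarith [h01.1]]

/-- Pointwise norm bound for `C₀` functions. -/
lemma norm_apply_le_c0 {X : Type*} [TopologicalSpace X] (f : C₀(X, ℂ)) (x : X) :
    ‖f x‖ ≤ ‖f‖ := by
  rw [← ZeroAtInftyContinuousMap.norm_toBCF_eq_norm]
  exact f.toBCF.norm_coe_le_norm x

/-- Norm bound from pointwise bounds for `C₀` functions. -/
lemma norm_le_c0 {X : Type*} [TopologicalSpace X] (f : C₀(X, ℂ)) {C : ℝ} (hC : 0 ≤ C)
    (h : ∀ x, ‖f x‖ ≤ C) : ‖f‖ ≤ C := by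
  rw [← ZeroAtInftyContinuousMap.norm_toBCF_eq_norm]
  exact (BoundedContinuousFunction.norm_le hC).mpr h

/-- If `X` is a locally compact, second countable Hausdorff space and
`R : C₀(X,ℂ) → C₀(X,ℂ)` is a bounded linear map such that `supp (R f) ⊆ supp f` for every
compactly supported `f`, then there is a bounded continuous `k : X → ℂ` with
`‖k‖_∞ ≤ ‖R‖` such that `R f = k • f` pointwise for all `f ∈ C₀(X)`. -/
theorem stmt0 {X : Type*} [TopologicalSpace X] [LocallyCompactSpace X]
    [SecondCountableTopology X] [T2Space X]
    (R : C₀(X, ℂ) →L[ℂ] C₀(X, ℂ))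
    (hR : ∀ f : C₀(X, ℂ), HasCompactSupport (f : X → ℂ) →
      tsupport ((R f : C₀(X, ℂ)) : X → ℂ) ⊆ tsupport (f : X → ℂ)) :
    ∃ k : X → ℂ, Continuous k ∧ (∀ x : X, ‖k x‖ ≤ ‖R‖) ∧
      ∀ (f : C₀(X, ℂ)) (x : X), (R f) x = k x * f x := by
  classical
  -- choose for each x a bump equal to 1 near x
  have HE : ∀ x : X, ∃ e : C₀(X, ℂ), HasCompactSupport (e : X → ℂ) ∧
      (∀ᶠ y in 𝓝 x, e y = 1) ∧ (∀ y, ‖e y‖ ≤ 1) := by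
    intro x
    obtain ⟨K, hK, hKx⟩ := exists_compact_mem_nhds x
    obtain ⟨e, hce, he1, _, hle, _⟩ := exists_bump_aux hK isOpen_univ (subset_univ K)
    exact ⟨e, hce, Filter.eventually_of_mem hKx fun y hy => he1 hy, hle⟩
  choose E hEc hE1 hEle using HE
  set k : X → ℂ := fun x => R (E x) x with hk
  -- Lemma A: if h vanishes near x, then (R h) x = 0
  have lemA : ∀ (x : X) (h : C₀(X, ℂ)), (∀ᶠ y in 𝓝 x, h y = 0) → R h x = 0 := by
    intro x h hh
    have key : ∀ ε : ℝ, 0 < ε → ‖(R h) x‖ ≤ ‖R‖ * ε := by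
      intro ε hε
      -- compact set outside of which ‖h‖ < ε
      have hmem : {y : X | ‖h y‖ < ε} ∈ cocompact X := by
        have h0 : Tendsto (fun y => ‖h y‖) (cocompact X) (𝓝 0) := by
          simpa using (zero_at_infty h).norm
        exact h0 (Iio_mem_nhds hε)
      obtain ⟨K, hK, hKc⟩ := mem_cocompact.mp hmem
      obtain ⟨ψ, hψc, hψ1, _, hψle, hψle'⟩ := exists_bump_aux hK isOpen_univ (subset_univ K)
      set h' : C₀(X, ℂ) := h * ψ with hh'
      have hh'c : HasCompactSupport (h' : X → ℂ) := by
        rw [hh', ZeroAtInftyContinuousMap.coe_mul]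
        exact hψc.mul_left
      have hx' : x ∉ tsupport (h' : X → ℂ) := by
        rw [notMem_tsupport_iff_eventuallyEq]
        filter_upwards [hh] with y hy
        simp [hh', hy]
      have hRh' : (R h') x = 0 :=
        image_eq_zero_of_notMem_tsupport fun hc => hx' (hR h' hh'c hc)
      have hdiff : ‖h - h'‖ ≤ ε := by
        refine norm_le_c0 _ hε.le fun y => ?_
        have : (h - h') y = h y * (1 - ψ y) := by
          simp [hh', ZeroAtInftyContinuousMap.sub_apply,
            ZeroAtInftyContinuousMap.mul_apply]; ring
        rw [this, norm_mul]
        by_cases hy : y ∈ K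
        · have : ψ y = 1 := hψ1 hy
          simp [this]
          positivity
        · have h1 : ‖h y‖ < ε := hKc (by simpa using hy)
          calc ‖h y‖ * ‖1 - ψ y‖ ≤ ‖h y‖ * 1 :=
                mul_le_mul_of_nonneg_left (hψle' y) (norm_nonneg _)
            _ ≤ ε := by rw [mul_one]; exact h1.le
      calc ‖(R h) x‖ = ‖(R (h - h')) x + (R h') x‖ := by
            rw [map_sub]; simp [ZeroAtInftyContinuousMap.sub_apply]
        _ = ‖(R (h - h')) x‖ := by rw [hRh', add_zero]
        _ ≤ ‖R (h - h')‖ := norm_apply_le_c0 _ x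
        _ ≤ ‖R‖ * ‖h - h'‖ := R.le_opNorm _
        _ ≤ ‖R‖ * ε := mul_le_mul_of_nonneg_left hdiff (norm_nonneg R)
    refine norm_le_zero_iff.mp (le_of_forall_pos_le_add fun δ hδ => ?_)
    have h1 := key (δ / (‖R‖ + 1)) (by positivity)
    have h2 : ‖R‖ * (δ / (‖R‖ + 1)) ≤ (‖R‖ + 1) * (δ / (‖R‖ + 1)) := by
      gcongr; linarith
    have h3 : (‖R‖ + 1) * (δ / (‖R‖ + 1)) = δ := by
      field_simp
    linarith
  -- Lemma B: if g is compactly supported and g x = 0, then (R g) x = 0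
  have lemB : ∀ (x : X) (g : C₀(X, ℂ)), HasCompactSupport (g : X → ℂ) → g x = 0 →
      R g x = 0 := by
    intro x g hgc hgx
    have key : ∀ ε : ℝ, 0 < ε → ‖(R g) x‖ ≤ ‖R‖ * ε := by
      intro ε hε
      set U : Set X := {y | ‖g y‖ < ε} with hU
      have hUo : IsOpen U := isOpen_lt (by continuity) continuous_const
      have hxU : x ∈ U := by simp [hU, hgx, hε]
      obtain ⟨K, hK, hKi, hKU⟩ := exists_compact_subset hUo hxU
      obtain ⟨φ, hφc, hφ1, hφ0, hφle, hφle'⟩ := exists_bump_aux hK hUo hKU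
      set h : C₀(X, ℂ) := g - g * φ with hh
      have hhc : HasCompactSupport (h : X → ℂ) := by
        rw [hh, ZeroAtInftyContinuousMap.coe_sub, ZeroAtInftyContinuousMap.coe_mul,
          sub_eq_add_neg]
        exact hgc.add ((hφc.mul_left).comp_left (g := Neg.neg) neg_zero)
      have hhx : ∀ᶠ y in 𝓝 x, h y = 0 := by
        filter_upwards [mem_interior_iff_mem_nhds.mp hKi] with y hy
        have : φ y = 1 := hφ1 hy
        simp [hh, ZeroAtInftyContinuousMap.sub_apply, ZeroAtInftyContinuousMap.mul_apply, this]
      have hRh : (R h) x = 0 := lemA x h hhx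
      have hdiff : ‖g - h‖ ≤ ε := by
        refine norm_le_c0 _ hε.le fun y => ?_
        have : (g - h) y = g y * φ y := by
          simp [hh, ZeroAtInftyContinuousMap.sub_apply, ZeroAtInftyContinuousMap.mul_apply]
        rw [this, norm_mul]
        by_cases hy : y ∈ U
        · calc ‖g y‖ * ‖φ y‖ ≤ ‖g y‖ * 1 :=
              mul_le_mul_of_nonneg_left (hφle y) (norm_nonneg _)
            _ ≤ ε := by rw [mul_one]; exact (hy : ‖g y‖ < ε).le
        · rw [hφ0 y hy]; simp [hε.le]
      calc ‖(R g) x‖ = ‖(R (g - h)) x + (R h) x‖ := by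
            rw [map_sub]; simp [ZeroAtInftyContinuousMap.sub_apply]
        _ = ‖(R (g - h)) x‖ := by rw [hRh, add_zero]
        _ ≤ ‖R (g - h)‖ := norm_apply_le_c0 _ x
        _ ≤ ‖R‖ * ‖g - h‖ := R.le_opNorm _
        _ ≤ ‖R‖ * ε := mul_le_mul_of_nonneg_left hdiff (norm_nonneg R)
    refine norm_le_zero_iff.mp (le_of_forall_pos_le_add fun δ hδ => ?_)
    have h1 := key (δ / (‖R‖ + 1)) (by positivity)
    have h2 : ‖R‖ * (δ / (‖R‖ + 1)) ≤ (‖R‖ + 1) * (δ / (‖R‖ + 1)) := by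
      gcongr; linarith
    have h3 : (‖R‖ + 1) * (δ / (‖R‖ + 1)) = δ := by
      field_simp
    linarith
  -- Main identity
  have main : ∀ (f : C₀(X, ℂ)) (x : X), (R f) x = k x * f x := by
    intro f x
    set φ := E x with hφ
    have hφx : φ x = 1 := (hE1 x).self_of_nhds
    -- step 1 : R f x = R (f * φ) x
    have step1 : (R f) x = (R (f * φ)) x := by
      have : (R (f - f * φ)) x = 0 := by
        refine lemA x _ ?_
        filter_upwards [hE1 x] with y hy
        simp [ZeroAtInftyContinuousMap.sub_apply, ZeroAtInftyContinuousMap.mul_apply, hy, hφ]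
      have := this
      rw [map_sub] at this
      simp only [ZeroAtInftyContinuousMap.sub_apply, sub_eq_zero] at this
      exact this
    -- step 2 : R (f * φ) x = f x * R φ x
    have step2 : (R (f * φ)) x = f x * (R φ) x := by
      have hg : HasCompactSupport ((f * φ - f x • φ : C₀(X, ℂ)) : X → ℂ) := by
        rw [ZeroAtInftyContinuousMap.coe_sub, ZeroAtInftyContinuousMap.coe_mul,
          ZeroAtInftyContinuousMap.coe_smul, sub_eq_add_neg]
        exact ((hEc x).mul_left).add
          (((hEc x).smul_left).comp_left (g := Neg.neg) neg_zero)
      have hgx : (f * φ - f x • φ : C₀(X, ℂ)) x = 0 := by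
        simp [ZeroAtInftyContinuousMap.sub_apply, ZeroAtInftyContinuousMap.mul_apply,
          ZeroAtInftyContinuousMap.smul_apply, hφx]
      have := lemB x _ hg hgx
      rw [map_sub, map_smul] at this
      simp only [ZeroAtInftyContinuousMap.sub_apply, ZeroAtInftyContinuousMap.smul_apply,
        smul_eq_mul, sub_eq_zero] at this
      exact this
    rw [step1, step2, hk, mul_comm]
  refine ⟨k, ?_, ?_, main⟩
  · -- continuity
    rw [continuous_iff_continuousAt]
    intro x
    have hev : k =ᶠ[𝓝 x] ⇑(R (E x)) := by
      filter_upwards [hE1 x] with y hy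
      have := main (E x) y
      rw [hy, mul_one] at this
      exact this.symm
    exact ((R (E x)).continuous.continuousAt).congr hev.symm
  · -- norm bound
    intro x
    calc ‖k x‖ ≤ ‖R (E x)‖ := norm_apply_le_c0 _ x
      _ ≤ ‖R‖ * ‖E x‖ := R.le_opNorm _
      _ ≤ ‖R‖ * 1 := mul_le_mul_of_nonneg_left
          (norm_le_c0 _ zero_le_one (hEle x)) (norm_nonneg R)
      _ = ‖R‖ := mul_one _
end

section
/- The topology on H generated by ℬ is Hausdorff. -/
open TopologicalSpace Set

/-- The collection `ℬ` of subsets of `H = G ⊔ X`: all open subsets of `G`, together with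
all sets of the form `r̃⁻¹(W) \ C` where `W ⊆ X` is open and `C ⊆ G` is compact.
Here `r̃ = Sum.elim r id : G ⊕ X → X` extends `r` by `r̃(∞^u) = u`. -/
def basisSets (G X : Type*) [TopologicalSpace G] [TopologicalSpace X] (r : G → X) :
    Set (Set (G ⊕ X)) :=
  {s | ∃ U : Set G, IsOpen U ∧ s = Sum.inl '' U} ∪
  {s | ∃ (W : Set X) (C : Set G), IsOpen W ∧ IsCompact C ∧
      s = Sum.elim r id ⁻¹' W \ Sum.inl '' C}

/-- the topology on `H` generated by `ℬ` is Hausdorff. -/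
theorem stmt2 {G X : Type*} [TopologicalSpace G] [TopologicalSpace X]
    [LocallyCompactSpace G] [SecondCountableTopology G] [T2Space G]
    [LocallyCompactSpace X] [SecondCountableTopology X] [T2Space X]
    (r : G → X) (hc : Continuous r) (ho : IsOpenMap r) (hs : Function.Surjective r) :
    @T2Space (G ⊕ X) (TopologicalSpace.generateFrom (basisSets G X r)) := by
  letI t : TopologicalSpace (G ⊕ X) := TopologicalSpace.generateFrom (basisSets G X r)
  have hbasic : ∀ s ∈ basisSets G X r, @IsOpen _ t s := fun s hs =>
    TopologicalSpace.GenerateOpen.basic s hs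
  constructor
  rintro (x | u) (y | v) hab
  · -- inl x, inl y
    have hxy : x ≠ y := fun h => hab (by rw [h])
    obtain ⟨U, V, hU, hV, hxU, hyV, hUV⟩ := t2_separation hxy
    refine ⟨Sum.inl '' U, Sum.inl '' V, hbasic _ (Or.inl ⟨U, hU, rfl⟩),
      hbasic _ (Or.inl ⟨V, hV, rfl⟩), mem_image_of_mem _ hxU, mem_image_of_mem _ hyV, ?_⟩
    exact (Set.disjoint_image_iff Sum.inl_injective).2 hUV
  · -- inl x, inr v
    obtain ⟨K, hK, hKx⟩ := exists_compact_mem_nhds x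
    obtain ⟨U, hUK, hU, hxU⟩ := mem_nhds_iff.mp hKx
    refine ⟨Sum.inl '' U, Sum.elim r id ⁻¹' univ \ Sum.inl '' K,
      hbasic _ (Or.inl ⟨U, hU, rfl⟩),
      hbasic _ (Or.inr ⟨univ, K, isOpen_univ, hK, rfl⟩),
      mem_image_of_mem _ hxU, ⟨trivial, by simp⟩, ?_⟩
    exact Set.disjoint_sdiff_right.mono_left (Set.image_mono (f := Sum.inl) hUK)
  · -- inr u, inl y
    obtain ⟨K, hK, hKy⟩ := exists_compact_mem_nhds y
    obtain ⟨U, hUK, hU, hyU⟩ := mem_nhds_iff.mp hKy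
    refine ⟨Sum.elim r id ⁻¹' univ \ Sum.inl '' K, Sum.inl '' U,
      hbasic _ (Or.inr ⟨univ, K, isOpen_univ, hK, rfl⟩),
      hbasic _ (Or.inl ⟨U, hU, rfl⟩),
      ⟨trivial, by simp⟩, mem_image_of_mem _ hyU, ?_⟩
    exact Set.disjoint_sdiff_left.mono_right (Set.image_mono (f := Sum.inl) hUK)
  · -- inr u, inr v
    have huv : u ≠ v := fun h => hab (by rw [h])
    obtain ⟨W1, W2, hW1, hW2, huW, hvW, hW⟩ := t2_separation huv
    refine ⟨Sum.elim r id ⁻¹' W1 \ Sum.inl '' (∅ : Set G),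
      Sum.elim r id ⁻¹' W2 \ Sum.inl '' (∅ : Set G),
      hbasic _ (Or.inr ⟨W1, ∅, hW1, isCompact_empty, rfl⟩),
      hbasic _ (Or.inr ⟨W2, ∅, hW2, isCompact_empty, rfl⟩),
      ⟨huW, by simp⟩, ⟨hvW, by simp⟩, ?_⟩
    exact ((hW.preimage (Sum.elim r id)).mono (diff_subset) (diff_subset))
end

section
/- The topology on H generated by ℬ is locally compact, i.e. every point of H has a compact neighborhood. -/
open TopologicalSpace Set

/-- the topology on `H` generated by `ℬ` is locally compact:
every point of `H` has a compact neighborhood. -/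
theorem stmt3 {G X : Type*} [TopologicalSpace G] [TopologicalSpace X]
    [LocallyCompactSpace G] [SecondCountableTopology G] [T2Space G]
    [LocallyCompactSpace X] [SecondCountableTopology X] [T2Space X]
    (r : G → X) (hc : Continuous r) (ho : IsOpenMap r) (hs : Function.Surjective r) :
    ∀ h : G ⊕ X, ∃ K : Set (G ⊕ X),
      @IsCompact (G ⊕ X) (TopologicalSpace.generateFrom (basisSets G X r)) K ∧
      K ∈ @nhds (G ⊕ X) (TopologicalSpace.generateFrom (basisSets G X r)) h := by
  classical
  letI : TopologicalSpace (G ⊕ X) := generateFrom (basisSets G X r)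
  set p : G ⊕ X → X := Sum.elim r id with hp
  -- `Sum.inl` is continuous into the generated topology
  have hinl : Continuous (Sum.inl : G → G ⊕ X) := by
    apply continuous_generateFrom_iff.mpr
    rintro s (⟨U, hU, rfl⟩ | ⟨W, C, hW, hC, rfl⟩)
    · rwa [preimage_image_eq U Sum.inl_injective]
    · have : (Sum.inl : G → G ⊕ X) ⁻¹' (Sum.elim r id ⁻¹' W \ Sum.inl '' C)
          = r ⁻¹' W \ C := by
        rw [preimage_diff, preimage_image_eq C Sum.inl_injective]; rfl
      rw [this]
      exact (hW.preimage hc).sdiff hC.isClosed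
  -- ℬ is a topological basis
  have hbasis : IsTopologicalBasis (basisSets G X r) := by
    refine ⟨?_, ?_, rfl⟩
    · rintro t₁ (⟨U₁, hU₁, rfl⟩ | ⟨W₁, C₁, hW₁, hC₁, rfl⟩)
        t₂ (⟨U₂, hU₂, rfl⟩ | ⟨W₂, C₂, hW₂, hC₂, rfl⟩) x hx
      · refine ⟨Sum.inl '' (U₁ ∩ U₂), Or.inl ⟨U₁ ∩ U₂, hU₁.inter hU₂, rfl⟩, ?_, ?_⟩
        · rwa [image_inter Sum.inl_injective]
        · rw [image_inter Sum.inl_injective]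
      · refine ⟨Sum.inl '' (U₁ ∩ (r ⁻¹' W₂ \ C₂)),
          Or.inl ⟨_, hU₁.inter ((hW₂.preimage hc).sdiff hC₂.isClosed), rfl⟩, ?_, ?_⟩
        · obtain ⟨⟨g, hg, rfl⟩, hrW, hnC⟩ := hx
          exact ⟨g, ⟨hg, hrW, fun h => hnC ⟨g, h, rfl⟩⟩, rfl⟩
        · rintro _ ⟨g, ⟨hg, hrW, hnC⟩, rfl⟩
          exact ⟨⟨g, hg, rfl⟩, hrW, fun ⟨g', hg', he⟩ =>
            hnC (Sum.inl_injective he ▸ hg')⟩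
      · refine ⟨Sum.inl '' (U₂ ∩ (r ⁻¹' W₁ \ C₁)),
          Or.inl ⟨_, hU₂.inter ((hW₁.preimage hc).sdiff hC₁.isClosed), rfl⟩, ?_, ?_⟩
        · obtain ⟨⟨hrW, hnC⟩, ⟨g, hg, rfl⟩⟩ := hx
          exact ⟨g, ⟨hg, hrW, fun h => hnC ⟨g, h, rfl⟩⟩, rfl⟩
        · rintro _ ⟨g, ⟨hg, hrW, hnC⟩, rfl⟩
          exact ⟨⟨hrW, fun ⟨g', hg', he⟩ => hnC (Sum.inl_injective he ▸ hg')⟩,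
            ⟨g, hg, rfl⟩⟩
      · refine ⟨Sum.elim r id ⁻¹' (W₁ ∩ W₂) \ Sum.inl '' (C₁ ∪ C₂),
          Or.inr ⟨W₁ ∩ W₂, C₁ ∪ C₂, hW₁.inter hW₂, hC₁.union hC₂, rfl⟩, ?_, ?_⟩
        · obtain ⟨⟨h1, h2⟩, ⟨h3, h4⟩⟩ := hx
          rw [image_union]
          exact ⟨⟨h1, h3⟩, fun h => h.elim h2 h4⟩
        · rw [image_union]
          rintro y ⟨⟨h1, h3⟩, h24⟩
          exact ⟨⟨h1, fun h => h24 (Or.inl h)⟩, ⟨h3, fun h => h24 (Or.inr h)⟩⟩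
    · apply sUnion_eq_univ_iff.mpr
      intro x
      exact ⟨univ, Or.inr ⟨univ, ∅, isOpen_univ, isCompact_empty, by simp⟩, trivial⟩
  intro h
  cases h with
  | inl g =>
    obtain ⟨K, hKc, hKn⟩ := exists_compact_mem_nhds g
    refine ⟨Sum.inl '' K, hKc.image hinl, ?_⟩
    rw [mem_nhds_iff]
    refine ⟨Sum.inl '' (interior K), image_mono interior_subset,
      hbasis.isOpen (Or.inl ⟨interior K, isOpen_interior, rfl⟩),
      ⟨g, mem_interior_iff_mem_nhds.mpr hKn, rfl⟩⟩
  | inr u =>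
    obtain ⟨KX, hKXc, hKXn⟩ := exists_compact_mem_nhds u
    refine ⟨p ⁻¹' KX, ?_, ?_⟩
    · -- compactness of r̃⁻¹(KX)
      apply isCompact_of_finite_subcover
      intro ι U hUo hcov
      -- for each v ∈ KX, a basic set of the second kind inside some U i
      have key : ∀ v ∈ KX, ∃ (i : ι) (W : Set X) (C : Set G), IsOpen W ∧ IsCompact C ∧
          v ∈ W ∧ Sum.elim r id ⁻¹' W \ Sum.inl '' C ⊆ U i := by
        intro v hv
        have hmem : (Sum.inr v : G ⊕ X) ∈ ⋃ i, U i := hcov hv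
        obtain ⟨i, hi⟩ := mem_iUnion.mp hmem
        obtain ⟨t, ht, hxt, htU⟩ := hbasis.exists_subset_of_mem_open hi (hUo i)
        rcases ht with ⟨U', _, rfl⟩ | ⟨W, C, hW, hC, rfl⟩
        · obtain ⟨g, _, hg⟩ := hxt
          exact absurd hg (by simp)
        · exact ⟨i, W, C, hW, hC, hxt.1, htU⟩
      choose i W C hWo hCc hvW hsub using key
      -- finite subcover of KX by the W's
      obtain ⟨s, hscov⟩ := hKXc.elim_finite_subcover
        (fun v : KX => W v v.2) (fun v => hWo v v.2)
        (fun v hv => mem_iUnion.mpr ⟨⟨v, hv⟩, hvW v hv⟩)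
      -- leftover compact piece
      set C' : Set G := (⋃ v ∈ s, C v v.2) ∩ r ⁻¹' KX with hC'
      have hC'c : IsCompact C' :=
        ((s.finite_toSet.isCompact_biUnion (fun v _ => hCc v v.2)).inter_right
          (hKXc.isClosed.preimage hc))
      have hC'sub : Sum.inl '' C' ⊆ ⋃ i, U i := by
        rintro _ ⟨g, ⟨_, hg2⟩, rfl⟩
        exact hcov hg2
      obtain ⟨s', hs'cov⟩ := (hC'c.image hinl).elim_finite_subcover U hUo hC'sub
      refine ⟨s' ∪ s.image (fun v : KX => i v.1 v.2), ?_⟩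
      intro x hx
      rw [mem_iUnion₂]
      cases x with
      | inr w =>
        have hw : w ∈ KX := hx
        obtain ⟨v, hvs, hwW⟩ := mem_iUnion₂.mp (hscov hw)
        refine ⟨i v v.2, Finset.mem_union_right _ (Finset.mem_image_of_mem _ hvs),
          hsub v v.2 ⟨hwW, by simp⟩⟩
      | inl g =>
        have hg : r g ∈ KX := hx
        obtain ⟨v, hvs, hgW⟩ := mem_iUnion₂.mp (hscov hg)
        by_cases hgC : g ∈ C v v.2
        · have : g ∈ C' := ⟨mem_iUnion₂.mpr ⟨v, hvs, hgC⟩, hg⟩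
          obtain ⟨j, hjs, hj⟩ := mem_iUnion₂.mp (hs'cov ⟨g, this, rfl⟩)
          exact ⟨j, Finset.mem_union_left _ hjs, hj⟩
        · refine ⟨i v v.2, Finset.mem_union_right _ (Finset.mem_image_of_mem _ hvs),
            hsub v v.2 ⟨hgW, ?_⟩⟩
          rintro ⟨g', hg', he⟩
          exact hgC (Sum.inl_injective he ▸ hg')
    · rw [mem_nhds_iff]
      refine ⟨p ⁻¹' interior KX, preimage_mono interior_subset, ?_, ?_⟩
      · have : p ⁻¹' interior KX
            = Sum.elim r id ⁻¹' interior KX \ Sum.inl '' (∅ : Set G) := by simp [hp]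
        rw [this]
        exact hbasis.isOpen (Or.inr ⟨interior KX, ∅, isOpen_interior, isCompact_empty, rfl⟩)
      · exact mem_interior_iff_mem_nhds.mpr hKXn
end

section
/- The topology on H generated by ℬ is second countable. -/
open TopologicalSpace Set Topology

/-- the topology on `H` generated by `ℬ` is second countable. -/
theorem stmt4 {G X : Type*} [TopologicalSpace G] [TopologicalSpace X]
    [LocallyCompactSpace G] [SecondCountableTopology G] [T2Space G]
    [LocallyCompactSpace X] [SecondCountableTopology X] [T2Space X]
    (r : G → X) (hc : Continuous r) (ho : IsOpenMap r) (hs : Function.Surjective r) :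
    @SecondCountableTopology (G ⊕ X) (TopologicalSpace.generateFrom (basisSets G X r)) := by
  classical
  set f : G ⊕ X → X := Sum.elim r id with hf
  obtain K := CompactExhaustion.choice G
  set b : Set (Set (G ⊕ X)) :=
    ((fun U : Set G => Sum.inl '' U) '' countableBasis G) ∪
    ((fun p : Set X × ℕ => f ⁻¹' p.1 \ Sum.inl '' K p.2) ''
      (countableBasis X ×ˢ (univ : Set ℕ))) with hb
  have hsub : b ⊆ basisSets G X r := by
    rintro s (⟨U, hU, rfl⟩ | ⟨⟨W, n⟩, ⟨hW, -⟩, rfl⟩)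
    · exact Or.inl ⟨U, (isBasis_countableBasis G).isOpen hU, rfl⟩
    · exact Or.inr ⟨W, K n, (isBasis_countableBasis X).isOpen hW, K.isCompact n, rfl⟩
  have hcount : b.Countable :=
    ((countable_countableBasis G).image _).union
      (((countable_countableBasis X).prod countable_univ).image _)
  refine @SecondCountableTopology.mk _ (generateFrom (basisSets G X r)) ⟨b, hcount, ?_⟩
  refine le_antisymm (generateFrom_anti hsub) (le_generateFrom ?_)
  -- every element of basisSets is open in generateFrom b
  letI tb : TopologicalSpace (G ⊕ X) := generateFrom b
  have key : ∀ U : Set G, IsOpen U → IsOpen[tb] (Sum.inl '' U) := by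
    intro U hU
    rw [(isBasis_countableBasis G).open_eq_sUnion' hU, sUnion_eq_iUnion, image_iUnion]
    refine isOpen_iUnion fun V => ?_
    exact isOpen_generateFrom_of_mem (Or.inl ⟨V, V.2.1, rfl⟩)
  rintro s (⟨U, hU, rfl⟩ | ⟨W, C, hW, hC, rfl⟩)
  · exact key U hU
  · obtain ⟨n, hn⟩ := K.exists_superset_of_isCompact hC
    have hset : f ⁻¹' W \ Sum.inl '' C =
        Sum.inl '' (r ⁻¹' W \ C) ∪
        ⋃ (W' ∈ countableBasis X) (_ : W' ⊆ W), (f ⁻¹' W' \ Sum.inl '' K n) := by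
      ext p
      cases p with
      | inl g =>
        simp only [hf, mem_diff, mem_preimage, Sum.elim_inl, mem_union, mem_image,
          Sum.inl.injEq, mem_iUnion, exists_prop]
        constructor
        · rintro ⟨hg, hgC⟩
          exact Or.inl ⟨g, ⟨hg, fun h => hgC ⟨g, h, rfl⟩⟩, rfl⟩
        · rintro (⟨g', ⟨hg', hg'C⟩, rfl⟩ | ⟨W', ⟨hW'B, hW'W, hgW', hgK⟩⟩)
          · exact ⟨hg', by rintro ⟨g'', hg'', rfl⟩; exact hg'C hg''⟩
          · exact ⟨hW'W hgW', fun h => hgK (by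
              obtain ⟨g'', hg'', heq⟩ := h
              exact ⟨g'', hn (heq ▸ hg''), heq⟩)⟩
      | inr u =>
        simp only [hf, mem_diff, mem_preimage, Sum.elim_inr, id_eq, mem_union, mem_image,
          mem_iUnion, exists_prop]
        constructor
        · rintro ⟨hu, -⟩
          obtain ⟨W', hW'B, huW', hW'W⟩ :=
            (isBasis_countableBasis X).exists_subset_of_mem_open hu hW
          exact Or.inr ⟨W', hW'B, hW'W, huW', by rintro ⟨g, -, h⟩; exact (Sum.inl_ne_inr h).elim⟩
        · rintro (⟨g, -, h⟩ | ⟨W', ⟨-, hW'W, huW', -⟩⟩)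
          · exact (Sum.inl_ne_inr h).elim
          · exact ⟨hW'W huW', by rintro ⟨g, -, h⟩; exact (Sum.inl_ne_inr h).elim⟩
    rw [hset]
    refine IsOpen.union (key _ ((hW.preimage hc).sdiff hC.isClosed)) ?_
    refine isOpen_iUnion fun W' => isOpen_iUnion fun hW'B => isOpen_iUnion fun _ => ?_
    exact isOpen_generateFrom_of_mem (Or.inr ⟨⟨W', n⟩, ⟨hW'B, mem_univ n⟩, rfl⟩)
end

section
/- The canonical inclusion of G into H is an open embedding: G is an open subset of H, and the relative topology that G inherits from H coincides with its original topology. -/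
open TopologicalSpace Set

/-- the canonical inclusion `G → H` is an open embedding: `G` is open in `H`
and the relative topology on `G` inherited from `H` is the original topology of `G`. -/
theorem stmt5 {G X : Type*} [TopologicalSpace G] [TopologicalSpace X]
    [LocallyCompactSpace G] [SecondCountableTopology G] [T2Space G]
    [LocallyCompactSpace X] [SecondCountableTopology X] [T2Space X]
    (r : G → X) (hc : Continuous r) (ho : IsOpenMap r) (hs : Function.Surjective r) :
    @Topology.IsOpenEmbedding G (G ⊕ X) _ (TopologicalSpace.generateFrom (basisSets G X r))
      Sum.inl := by
  letI t : TopologicalSpace (G ⊕ X) := TopologicalSpace.generateFrom (basisSets G X r)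
  have hcont : Continuous (Sum.inl : G → G ⊕ X) := by
    refine continuous_generateFrom_iff.mpr ?_
    rintro s (⟨U, hU, rfl⟩ | ⟨W, C, hW, hC, rfl⟩)
    · have : Sum.inl ⁻¹' (Sum.inl '' U : Set (G ⊕ X)) = U :=
        Set.preimage_image_eq U Sum.inl_injective
      rw [this]; exact hU
    · have : (Sum.inl : G → G ⊕ X) ⁻¹' (Sum.elim r id ⁻¹' W \ Sum.inl '' C)
          = r ⁻¹' W \ C := by
        ext g
        simp [Set.mem_diff, Sum.inl_injective.mem_set_image]
      rw [this]
      exact (hW.preimage hc).sdiff hC.isClosed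
  have hopen : IsOpenMap (Sum.inl : G → G ⊕ X) := by
    intro U hU
    exact TopologicalSpace.GenerateOpen.basic _ (Or.inl ⟨U, hU, rfl⟩)
  exact Topology.isOpenEmbedding_iff_continuous_injective_isOpenMap.mpr ⟨hcont, Sum.inl_injective, hopen⟩
end

section
/- The extended map r̃ : H → X is continuous and open. -/
open TopologicalSpace Set

/-- the extended map `r̃ : H → X` is continuous and open. -/
theorem stmt6 {G X : Type*} [TopologicalSpace G] [TopologicalSpace X]
    [LocallyCompactSpace G] [SecondCountableTopology G] [T2Space G]
    [LocallyCompactSpace X] [SecondCountableTopology X] [T2Space X]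
    (r : G → X) (hc : Continuous r) (ho : IsOpenMap r) (hs : Function.Surjective r) :
    @Continuous (G ⊕ X) X (TopologicalSpace.generateFrom (basisSets G X r)) _
      (Sum.elim r id) ∧
    @IsOpenMap (G ⊕ X) X (TopologicalSpace.generateFrom (basisSets G X r)) _
      (Sum.elim r id) := by
  letI T : TopologicalSpace (G ⊕ X) := generateFrom (basisSets G X r)
  -- closure under intersections
  have hinter : ∀ t₁ ∈ basisSets G X r, ∀ t₂ ∈ basisSets G X r,
      t₁ ∩ t₂ ∈ basisSets G X r := by
    rintro t₁ (⟨U₁, hU₁, rfl⟩ | ⟨W₁, C₁, hW₁, hC₁, rfl⟩) t₂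
        (⟨U₂, hU₂, rfl⟩ | ⟨W₂, C₂, hW₂, hC₂, rfl⟩)
    · refine Or.inl ⟨U₁ ∩ U₂, hU₁.inter hU₂, ?_⟩
      rw [image_inter Sum.inl_injective]
    · refine Or.inl ⟨(U₁ ∩ r ⁻¹' W₂) \ C₂,
        ((hU₁.inter (hW₂.preimage hc)).sdiff hC₂.isClosed), ?_⟩
      ext z
      cases z with
      | inl g => simp; tauto
      | inr x => simp
    · refine Or.inl ⟨(U₂ ∩ r ⁻¹' W₁) \ C₁,
        ((hU₂.inter (hW₁.preimage hc)).sdiff hC₁.isClosed), ?_⟩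
      ext z
      cases z with
      | inl g => simp; tauto
      | inr x => simp
    · refine Or.inr ⟨W₁ ∩ W₂, C₁ ∪ C₂, hW₁.inter hW₂, hC₁.union hC₂, ?_⟩
      ext z
      cases z with
      | inl g => simp; tauto
      | inr x => simp
  have hB : @IsTopologicalBasis (G ⊕ X) T (basisSets G X r) := by
    refine ⟨?_, ?_, rfl⟩
    · intro t₁ h₁ t₂ h₂ x hx
      exact ⟨t₁ ∩ t₂, hinter t₁ h₁ t₂ h₂, hx, subset_rfl⟩
    · apply eq_univ_of_univ_subset
      intro z _
      refine ⟨Sum.elim r id ⁻¹' univ \ Sum.inl '' ∅,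
        Or.inr ⟨univ, ∅, isOpen_univ, isCompact_empty, rfl⟩, ?_⟩
      simp
  constructor
  · rw [@continuous_def]
    intro W hW
    have : Sum.elim r id ⁻¹' W = Sum.elim r id ⁻¹' W \ Sum.inl '' (∅ : Set G) := by
      simp
    rw [this]
    exact GenerateOpen.basic _ (Or.inr ⟨W, ∅, hW, isCompact_empty, rfl⟩)
  · rw [hB.isOpenMap_iff]
    rintro s (⟨U, hU, rfl⟩ | ⟨W, C, hW, hC, rfl⟩)
    · have : Sum.elim r id '' (Sum.inl '' U) = r '' U := by
        rw [image_image]; rfl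
      rw [this]; exact ho U hU
    · have : Sum.elim r id '' (Sum.elim r id ⁻¹' W \ Sum.inl '' C) = W := by
        apply subset_antisymm
        · rintro _ ⟨z, ⟨hz, -⟩, rfl⟩; exact hz
        · intro x hx
          exact ⟨Sum.inr x, ⟨hx, by simp⟩, rfl⟩
      rw [this]; exact hW
end

section
/- For each u ∈ X, the fiber H^u = r̃⁻¹({u}), with the subspace topology inherited from H, is the one-point compactification of the fiber G^u = r⁻¹({u}) (with its subspace topology from G): the natural bijection from the one-point compactification OnePoint(G^u) to H^u, sending the point at infinity to ∞^u and each point of G^u to itself, is a homeomorphism. -/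
open TopologicalSpace Set

/-- for each `u ∈ X`, the fiber `H^u = r̃⁻¹({u})` with the subspace topology
from `H` is the one-point compactification of the fiber `G^u = r⁻¹({u})`: the natural
bijection `OnePoint (G^u) → H^u` (sending `∞` to `∞^u` and each point of `G^u` to itself)
is a homeomorphism. -/
theorem stmt8 {G X : Type*} [TopologicalSpace G] [TopologicalSpace X]
    [LocallyCompactSpace G] [SecondCountableTopology G] [T2Space G]
    [LocallyCompactSpace X] [SecondCountableTopology X] [T2Space X]
    (r : G → X) (hc : Continuous r) (ho : IsOpenMap r) (hs : Function.Surjective r) (u : X) :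
    letI : TopologicalSpace (G ⊕ X) := TopologicalSpace.generateFrom (basisSets G X r)
    IsHomeomorph (fun z : OnePoint (r ⁻¹' {u} : Set G) =>
      (Option.elim z ⟨Sum.inr u, rfl⟩ (fun x => ⟨Sum.inl x.1, x.2⟩) :
        {h : G ⊕ X // Sum.elim r id h = u})) := by
  letI : TopologicalSpace (G ⊕ X) := TopologicalSpace.generateFrom (basisSets G X r)
  set f : OnePoint (r ⁻¹' {u} : Set G) → {h : G ⊕ X // Sum.elim r id h = u} :=
    fun z => (Option.elim z ⟨Sum.inr u, rfl⟩ (fun x => ⟨Sum.inl x.1, x.2⟩)) with hf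
  have hGu : IsClosed (r ⁻¹' {u}) := IsClosed.preimage hc isClosed_singleton
  have hemb : Topology.IsClosedEmbedding (Subtype.val : (r ⁻¹' {u} : Set G) → G) :=
    hGu.isClosedEmbedding_subtypeVal
  have hfinf : f OnePoint.infty = ⟨Sum.inr u, rfl⟩ := rfl
  have hfcoe : ∀ x : (r ⁻¹' {u} : Set G), f (OnePoint.some x) = ⟨Sum.inl x.1, x.2⟩ :=
    fun x => rfl
  -- continuity
  have hcont : Continuous f := by
    apply Continuous.subtype_mk
    rw [continuous_generateFrom_iff]
    rintro s (⟨U, hU, rfl⟩ | ⟨W, C, hW, hCc, rfl⟩)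
    · show IsOpen (f ⁻¹' (Subtype.val ⁻¹' (Sum.inl '' U)))
      rw [OnePoint.isOpen_iff_of_notMem]
      · have : ((↑) ⁻¹' (f ⁻¹' (Subtype.val ⁻¹' (Sum.inl '' U))) :
            Set (r ⁻¹' {u} : Set G)) = Subtype.val ⁻¹' U := by
          ext x
          constructor
          · rintro ⟨y, hy, hxy⟩
            cases Sum.inl.inj hxy
            exact hy
          · intro hx
            exact ⟨x.1, hx, rfl⟩
        rw [this]
        exact hU.preimage hemb.continuous
      · rintro ⟨y, -, hy⟩
        exact Sum.inl_ne_inr hy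
    · show IsOpen (f ⁻¹' (Subtype.val ⁻¹' (Sum.elim r id ⁻¹' W \ Sum.inl '' C)))
      by_cases hu : u ∈ W
      · have hmem : OnePoint.infty ∈
            f ⁻¹' (Subtype.val ⁻¹' (Sum.elim r id ⁻¹' W \ Sum.inl '' C)) := by
          refine ⟨hu, ?_⟩
          rintro ⟨y, -, hy⟩
          exact Sum.inl_ne_inr hy
        rw [OnePoint.isOpen_iff_of_mem' hmem]
        have hpre : ((↑) ⁻¹' (f ⁻¹' (Subtype.val ⁻¹' (Sum.elim r id ⁻¹' W \ Sum.inl '' C))) :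
            Set (r ⁻¹' {u} : Set G)) = (Subtype.val ⁻¹' C)ᶜ := by
          ext x
          have hx : r x.1 = u := x.2
          constructor
          · rintro ⟨-, hnC⟩ hxC
            exact hnC ⟨x.1, hxC, rfl⟩
          · intro hxC
            refine ⟨?_, ?_⟩
            · show Sum.elim r id (f (OnePoint.some x)).1 ∈ W
              rw [(f (OnePoint.some x)).2]
              exact hu
            · rintro ⟨y, hyC, hy⟩
              cases Sum.inl.inj hy
              exact hxC hyC
        rw [hpre, compl_compl]
        exact ⟨hemb.isCompact_preimage hCc,
          (hCc.isClosed.preimage hemb.continuous).isOpen_compl⟩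
      · have : f ⁻¹' (Subtype.val ⁻¹' (Sum.elim r id ⁻¹' W \ Sum.inl '' C)) = ∅ := by
          ext z
          simp only [mem_preimage, mem_empty_iff_false, iff_false]
          cases z with
          | infty => exact fun h => hu h.1
          | coe x =>
            have hx : r x.1 = u := x.2
            rintro ⟨hW', -⟩
            have h2 : Sum.elim r id (f (OnePoint.some x)).1 ∈ W := hW'
            rw [(f (OnePoint.some x)).2] at h2
            exact hu h2
        rw [this]
        exact isOpen_empty
  -- openness
  have hopen : IsOpenMap f := by
    intro s hsOpen
    by_cases hinf : OnePoint.infty ∈ s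
    · rw [OnePoint.isOpen_iff_of_mem' hinf] at hsOpen
      obtain ⟨hK, -⟩ := hsOpen
      set C : Set G := Subtype.val '' (((↑) ⁻¹' s : Set (r ⁻¹' {u} : Set G))ᶜ) with hC
      have hCc : IsCompact C := hK.image hemb.continuous
      have hV : IsOpen (Sum.elim r id ⁻¹' (univ : Set X) \ Sum.inl '' C) :=
        isOpen_generateFrom_of_mem (Or.inr ⟨univ, C, isOpen_univ, hCc, rfl⟩)
      have himg : f '' s = Subtype.val ⁻¹' (Sum.elim r id ⁻¹' (univ : Set X) \ Sum.inl '' C) := by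
        ext ⟨h, hh⟩
        simp only [mem_image, mem_preimage, mem_diff, mem_univ, true_and]
        constructor
        · rintro ⟨z, hz, hfz⟩
          cases z with
          | infty =>
            have hval : (Sum.inr u : G ⊕ X) = h := congrArg Subtype.val hfz
            rw [← hval]
            rintro ⟨y, -, hy⟩
            exact Sum.inl_ne_inr hy
          | coe x =>
            have hval : (Sum.inl x.1 : G ⊕ X) = h := congrArg Subtype.val hfz
            rw [← hval]
            rintro ⟨y, hyK, hy⟩
            obtain ⟨w, hw, rfl⟩ := hyK
            cases Subtype.ext (Sum.inl.inj hy) -- w = x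
            exact hw hz
        · intro hnC
          cases h with
          | inr v =>
            have hv : v = u := hh
            subst hv
            exact ⟨OnePoint.infty, hinf, Subtype.ext rfl⟩
          | inl x =>
            have hx : x ∈ r ⁻¹' {u} := hh
            refine ⟨OnePoint.some ⟨x, hx⟩, ?_, rfl⟩
            by_contra hxs
            exact hnC ⟨x, ⟨⟨x, hx⟩, hxs, rfl⟩, rfl⟩
      rw [himg]
      exact hV.preimage continuous_subtype_val
    · rw [OnePoint.isOpen_iff_of_notMem hinf, isOpen_induced_iff] at hsOpen
      obtain ⟨U, hU, hUs⟩ := hsOpen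
      have hV : IsOpen (Sum.inl '' U : Set (G ⊕ X)) :=
        isOpen_generateFrom_of_mem (Or.inl ⟨U, hU, rfl⟩)
      have himg : f '' s = Subtype.val ⁻¹' (Sum.inl '' U) := by
        ext ⟨h, hh⟩
        simp only [mem_image, mem_preimage]
        constructor
        · rintro ⟨z, hz, hfz⟩
          cases z with
          | infty => exact absurd hz hinf
          | coe x =>
            have hval : (Sum.inl x.1 : G ⊕ X) = h := congrArg Subtype.val hfz
            have hxU : x ∈ (Subtype.val ⁻¹' U : Set (r ⁻¹' {u} : Set G)) := by
              rw [hUs]; exact hz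
            exact ⟨x.1, hxU, hval⟩
        · rintro ⟨x, hxU, hxh⟩
          have hx : x ∈ r ⁻¹' {u} := by rw [← hxh] at hh; exact hh
          refine ⟨OnePoint.some ⟨x, hx⟩, ?_, Subtype.ext hxh⟩
          have hmem : (⟨x, hx⟩ : (r ⁻¹' {u} : Set G)) ∈
              (Subtype.val ⁻¹' U : Set (r ⁻¹' {u} : Set G)) := hxU
          rw [hUs] at hmem
          exact hmem
      rw [himg]
      exact hV.preimage continuous_subtype_val
  -- bijectivity
  have hbij : Function.Bijective f := by
    constructor
    · intro a b hab
      have hval := congrArg Subtype.val hab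
      cases a with
      | infty =>
        cases b with
        | infty => rfl
        | coe y => rw [hfinf, hfcoe] at hval; exact absurd hval (by simp)
      | coe x =>
        cases b with
        | infty => rw [hfinf, hfcoe] at hval; exact absurd hval (by simp)
        | coe y =>
          rw [hfcoe, hfcoe] at hval
          exact congrArg _ (Subtype.ext (Sum.inl.inj hval))
    · rintro ⟨h, hh⟩
      cases h with
      | inl x => exact ⟨OnePoint.some ⟨x, hh⟩, rfl⟩
      | inr v =>
        have hv : v = u := hh
        subst hv
        exact ⟨OnePoint.infty, Subtype.ext rfl⟩
  exact ⟨hcont, hopen, hbij⟩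
end
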